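/- Let T > 0, let t satisfy 0 ≤ t ≤ T, and let λ > 0. Let μ : ℕ → ℝ with μ_k ≥ 0 for all k, and let u : ℕ → ℝ be such that ∑_k u_k^2 is summable. Then the series ∑_k exp(-2*t*μ_k)/(exp(-2*T*μ_k) + λ)^2 * u_k^2 is summable and its sum is at most λ^(t/T - 2) * ∑_k u_k^2. (This expresses the operator-norm bound ‖K_t‖^2 ≤ 1/λ^(2 - t/T) of Lemma 3.1.) -/

import Mathlib

open Real

/-- Operator-norm bound `‖K_t‖² ≤ λ^(t/T - 2)` of Lemma 3.1, in spectral form. -/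
theorem stmt_1 (T t lam : ℝ) (hT : 0 < T) (ht0 : 0 ≤ t) (htT : t ≤ T) (hlam : 0 < lam)
    (mu u : ℕ → ℝ) (hmu : ∀ k, 0 ≤ mu k)
    (hu : Summable fun k => (u k) ^ 2) :
    Summable (fun k =>
      Real.exp (-2 * t * mu k) / (Real.exp (-2 * T * mu k) + lam) ^ 2 * (u k) ^ 2) ∧
    ∑' k, Real.exp (-2 * t * mu k) / (Real.exp (-2 * T * mu k) + lam) ^ 2 * (u k) ^ 2
      ≤ lam ^ (t / T - 2) * ∑' k, (u k) ^ 2 := by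
  set θ : ℝ := t / T with hθdef
  have hθ0 : 0 ≤ θ := div_nonneg ht0 hT.le
  have hθ1 : θ ≤ 1 := (div_le_one hT).2 htT
  have key : ∀ k, Real.exp (-2 * t * mu k) / (Real.exp (-2 * T * mu k) + lam) ^ 2
      ≤ lam ^ (θ - 2) := by
    intro k
    set x : ℝ := Real.exp (-2 * T * mu k) with hxdef
    have hx : 0 < x := Real.exp_pos _
    have hxl : 0 < x + lam := by positivity
    have hexp : Real.exp (-2 * t * mu k) = x ^ θ := by
      rw [Real.rpow_def_of_pos hx, hxdef, Real.log_exp]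
      congr 1
      rw [hθdef]
      field_simp
    have h1 : x ^ θ ≤ (x + lam) ^ θ :=
      Real.rpow_le_rpow hx.le (by linarith) hθ0
    have h2 : lam ^ (2 - θ) ≤ (x + lam) ^ (2 - θ) :=
      Real.rpow_le_rpow hlam.le (by linarith) (by linarith)
    have h3 : x ^ θ * lam ^ (2 - θ) ≤ (x + lam) ^ (2 : ℕ) := by
      calc x ^ θ * lam ^ (2 - θ) ≤ (x + lam) ^ θ * (x + lam) ^ (2 - θ) :=
            mul_le_mul h1 h2 (Real.rpow_nonneg hlam.le _) (Real.rpow_nonneg hxl.le _)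
        _ = (x + lam) ^ (2 : ℝ) := by rw [← Real.rpow_add hxl]; ring_nf
        _ = (x + lam) ^ (2 : ℕ) := by rw [Real.rpow_two]
    rw [hexp, div_le_iff₀ (by positivity)]
    have : lam ^ (θ - 2) = (lam ^ (2 - θ))⁻¹ := by
      rw [← Real.rpow_neg hlam.le]; ring_nf
    rw [this]
    rw [inv_mul_eq_div, le_div_iff₀ (Real.rpow_pos_of_pos hlam _)]
    linarith [h3]
  have hbound : ∀ k, Real.exp (-2 * t * mu k) / (Real.exp (-2 * T * mu k) + lam) ^ 2 * (u k) ^ 2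
      ≤ lam ^ (θ - 2) * (u k) ^ 2 := fun k =>
    mul_le_mul_of_nonneg_right (key k) (sq_nonneg _)
  have hnn : ∀ k, 0 ≤ Real.exp (-2 * t * mu k) / (Real.exp (-2 * T * mu k) + lam) ^ 2 * (u k) ^ 2 := by
    intro k; positivity
  have hsum : Summable (fun k =>
      Real.exp (-2 * t * mu k) / (Real.exp (-2 * T * mu k) + lam) ^ 2 * (u k) ^ 2) :=
    Summable.of_nonneg_of_le hnn hbound (hu.mul_left _)
  refine ⟨hsum, ?_⟩
  calc ∑' k, Real.exp (-2 * t * mu k) / (Real.exp (-2 * T * mu k) + lam) ^ 2 * (u k) ^ 2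
      ≤ ∑' k, lam ^ (θ - 2) * (u k) ^ 2 := Summable.tsum_le_tsum hbound hsum (hu.mul_left _)
    _ = lam ^ (θ - 2) * ∑' k, (u k) ^ 2 := tsum_mul_left
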